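/- Given any countable collection of dense sets of pairs of strings (D_n)_{n∈ℕ}, there exist functions g₁, g₂ : ℕ → 2^{<ℕ} such that for every n and all strings γ₁, γ₂ of length n, the pair (γ₁⌢g₁(n), γ₂⌢g₂(n)) meets all of the sets D₀, D₁, ..., D_n. -/

import Mathlib

/-- The initial segment `x↾n` of a real `x ∈ 2^ℕ`, as a binary string. -/
def restrictSeq (x : ℕ → Bool) (n : ℕ) : List Bool := List.ofFn (fun i : Fin n => x i)

/-- A set of strings is dense if every string has an extension in it. -/
def DenseStr (D : Set (List Bool)) : Prop := ∀ σ : List Bool, ∃ τ, σ <+: τ ∧ τ ∈ D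

/-- A real meets a set of strings if some initial segment of it lies in the set. -/
def MeetsReal (x : ℕ → Bool) (A : Set (List Bool)) : Prop := ∃ n, restrictSeq x n ∈ A

/-- A real avoids a set of strings if no extension of some initial segment lies in the set. -/
def AvoidsReal (x : ℕ → Bool) (A : Set (List Bool)) : Prop :=
  ∃ n, ∀ τ, restrictSeq x n <+: τ → τ ∉ A

/-- A set of pairs of strings is dense if every pair has a coordinatewise extension in it. -/
def DensePair (D : Set (List Bool × List Bool)) : Prop :=
  ∀ σ τ : List Bool, ∃ σ' τ', σ <+: σ' ∧ τ <+: τ' ∧ (σ', τ') ∈ D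

/-- A pair of strings meets a set of pairs of strings if a pair of initial segments lies in it. -/
def MeetsPairStr (α β : List Bool) (D : Set (List Bool × List Bool)) : Prop :=
  ∃ α' β', α' <+: α ∧ β' <+: β ∧ (α', β') ∈ D

/-- A pair of reals meets a set of pairs of strings if a pair of initial segments lies in it. -/
def MeetsPairReal (x y : ℕ → Bool) (D : Set (List Bool × List Bool)) : Prop :=
  ∃ a b, (restrictSeq x a, restrictSeq y b) ∈ D

/-- `x` agrees with the string `s` on the interval `[k, k + |s|)`. -/
def AgreesOn (x : ℕ → Bool) (k : ℕ) (s : List Bool) : Prop :=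
  ∀ i, (h : i < s.length) → x (k + i) = s[i]

private lemma enumLen (n : ℕ) : ∃ l : List (List Bool), ∀ s : List Bool, s.length = n → s ∈ l := by
  refine ⟨((Finset.univ : Finset (Fin n → Bool)).toList).map List.ofFn, ?_⟩
  intro s hs
  simp only [List.mem_map, Finset.mem_toList, Finset.mem_univ, true_and]
  refine ⟨fun i => s.get ⟨i, hs ▸ i.2⟩, ?_⟩
  apply List.ext_get (by simp [hs])
  intro i h1 h2
  simp [List.get_ofFn]

private lemma core (D : ℕ → Set (List Bool × List Bool)) (hD : ∀ n, DensePair (D n))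
    (L : List (List Bool × List Bool × ℕ)) :
    ∃ s t : List Bool, ∀ p ∈ L, MeetsPairStr (p.1 ++ s) (p.2.1 ++ t) (D p.2.2) := by
  induction L with
  | nil => exact ⟨[], [], by simp⟩
  | cons p L ih =>
    obtain ⟨s, t, hst⟩ := ih
    obtain ⟨σ', τ', hσ, hτ, hmem⟩ := hD p.2.2 (p.1 ++ s) (p.2.1 ++ t)
    obtain ⟨u, hu⟩ := hσ
    obtain ⟨v, hv⟩ := hτ
    refine ⟨s ++ u, t ++ v, ?_⟩
    intro q hq
    rcases List.mem_cons.mp hq with rfl | hq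
    · exact ⟨σ', τ', ⟨[], by simp [← hu]⟩, ⟨[], by simp [← hv]⟩, hmem⟩
    · obtain ⟨α', β', h1, h2, h3⟩ := hst q hq
      refine ⟨α', β', h1.trans ?_, h2.trans ?_, h3⟩
      · exact ⟨u, by simp⟩
      · exact ⟨v, by simp⟩

theorem stmt_3 (D : ℕ → Set (List Bool × List Bool)) (hD : ∀ n, DensePair (D n)) :
    ∃ g₁ g₂ : ℕ → List Bool, ∀ n : ℕ, ∀ γ₁ γ₂ : List Bool,
      γ₁.length = n → γ₂.length = n →
      ∀ i ≤ n, MeetsPairStr (γ₁ ++ g₁ n) (γ₂ ++ g₂ n) (D i) := by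
  have key : ∀ n : ℕ, ∃ s t : List Bool, ∀ γ₁ γ₂ : List Bool,
      γ₁.length = n → γ₂.length = n →
      ∀ i ≤ n, MeetsPairStr (γ₁ ++ s) (γ₂ ++ t) (D i) := by
    intro n
    obtain ⟨l, hl⟩ := enumLen n
    obtain ⟨s, t, hst⟩ := core D hD
      (l.flatMap fun γ₁ => l.flatMap fun γ₂ => (List.range (n+1)).map fun i => (γ₁, γ₂, i))
    refine ⟨s, t, fun γ₁ γ₂ h1 h2 i hi => ?_⟩
    refine hst (γ₁, γ₂, i) ?_
    simp only [List.mem_flatMap, List.mem_map, List.mem_range]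
    exact ⟨γ₁, hl _ h1, γ₂, hl _ h2, i, Nat.lt_succ_of_le hi, rfl⟩
  choose g₁ g₂ hg using key
  exact ⟨g₁, g₂, hg⟩
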